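/- Let R be a domain and A a free R-algebra of rank 3 with basis 1, i, j. Then the basis can be changed (replacing i by i − f and j by j − e for suitable e, f ∈ R) so that the product ij lies in R·1; that is, every R-algebra of rank 3 has a good basis. -/

import Mathlib

section aux

variable {R A : Type*} [CommRing R] [Ring A] [Algebra R A]

/-- Shearing a basis by subtracting scalar multiples of `b 0` gives a basis. -/
noncomputable def shearBasis (b : Module.Basis (Fin 3) R A) (e f : R) :
    Module.Basis (Fin 3) R A :=
  b.map (LinearEquiv.ofLinear
    (b.constr R ![b 0, b 1 - f • b 0, b 2 - e • b 0])
    (b.constr R ![b 0, b 1 + f • b 0, b 2 + e • b 0])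
    (by
      apply b.ext
      intro k
      fin_cases k <;>
        simp [Module.Basis.constr_basis, map_sub, map_add, map_smul, sub_add_cancel,
          add_sub_cancel_right, Matrix.cons_val_zero, Matrix.cons_val_one])
    (by
      apply b.ext
      intro k
      fin_cases k <;>
        simp [Module.Basis.constr_basis, map_sub, map_add, map_smul, sub_add_cancel,
          add_sub_cancel_right, Matrix.cons_val_zero, Matrix.cons_val_one]))

lemma shearBasis_apply (b : Module.Basis (Fin 3) R A) (e f : R) (k : Fin 3) :
    shearBasis b e f k = ![b 0, b 1 - f • b 0, b 2 - e • b 0] k := by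
  simp [shearBasis, Module.Basis.map_apply]

end aux

/-- Every free R-algebra of rank 3 with basis 1, i, j has a good basis: one can
replace i by i - f and j by j - e so that the product of the new basis vectors
lies in R·1. -/
theorem rank_three_good_basis
    (R A : Type*) [CommRing R] [IsDomain R] [Ring A] [Algebra R A]
    (b : Module.Basis (Fin 3) R A) (hb0 : b 0 = 1) :
    ∃ (e f : R) (c : Module.Basis (Fin 3) R A),
      c 0 = 1 ∧ c 1 = b 1 - algebraMap R A f ∧ c 2 = b 2 - algebraMap R A e ∧
      ∃ d : R, c 1 * c 2 = algebraMap R A d := by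
  set d : R := b.repr (b 1 * b 2) 0 with hd
  set e : R := b.repr (b 1 * b 2) 1 with he
  set f : R := b.repr (b 1 * b 2) 2 with hf
  have hrepr : b 1 * b 2 = d • b 0 + e • b 1 + f • b 2 := by
    conv_lhs => rw [← b.sum_repr (b 1 * b 2)]
    rw [Fin.sum_univ_three]
  refine ⟨e, f, shearBasis b e f, ?_, ?_, ?_, ⟨d + f * e, ?_⟩⟩
  · rw [shearBasis_apply]; simpa using hb0
  · rw [shearBasis_apply]
    simp [hb0, Algebra.algebraMap_eq_smul_one]
  · rw [shearBasis_apply]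
    simp [hb0, Algebra.algebraMap_eq_smul_one]
  · rw [shearBasis_apply, shearBasis_apply]
    simp only [Matrix.cons_val_one, Matrix.cons_val_two, Matrix.head_cons,
      Matrix.tail_cons, Matrix.cons_val_zero, hb0]
    rw [sub_mul, mul_sub, mul_sub, hrepr, hb0]
    rw [Algebra.algebraMap_eq_smul_one]
    rw [smul_mul_assoc, smul_mul_assoc, mul_smul_comm, mul_smul_comm]
    simp only [one_mul, mul_one, smul_smul]
    module
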